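/- For every integer ℓ ≥ 0, the Durfee rectangle identity holds as an identity of formal power series (or for |q| < 1): ∑_{i=0}^{∞} q^{i(i+ℓ)} / ((q)_i (q)_{i+ℓ}) = 1/(q)_∞. -/

import Mathlib

/-!
STATEMENT 3: the Durfee rectangle identity
`∑_{i=0}^∞ q^{i(i+ℓ)}/((q)_i (q)_{i+ℓ}) = 1/(q)_∞` for `ℓ ≥ 0`,
as an identity of formal power series in `q`, stated coefficient-wise:
for every degree `d`, only the terms with `i ≤ d` contribute to the `d`-th
coefficient (term `i` has order `i(i+ℓ) ≥ i`), and the `d`-th coefficient of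
`1/(q)_∞` agrees with that of `1/(q)_d` (the factors `(1-q^k)⁻¹` with `k > d`
do not affect coefficients up to degree `d`).
-/

noncomputable section

namespace Stmt3

abbrev K : Type := PowerSeries ℚ

def q : K := PowerSeries.X

/-- `(q;q)_n = ∏_{k=1}^n (1 - q^k)`. -/
def poch (n : ℕ) : K := ∏ k ∈ Finset.range n, (1 - q ^ (k + 1))

/-- The `i`-th term of the Durfee rectangle sum with excess `ℓ`. -/
def t (ℓ i : ℕ) : K := q ^ (i * (i + ℓ)) * (poch i)⁻¹ * (poch (i + ℓ))⁻¹

/-- The truncated Durfee rectangle sum. -/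
def S (n ℓ : ℕ) : K := ∑ i ∈ Finset.range n, t ℓ i

lemma constantCoeff_poch (n : ℕ) : PowerSeries.constantCoeff (poch n) = 1 := by
  simp [poch, q]

lemma poch_mul_inv (n : ℕ) : poch n * (poch n)⁻¹ = 1 :=
  PowerSeries.mul_inv_cancel _ (by rw [constantCoeff_poch]; exact one_ne_zero)

lemma poch_succ (n : ℕ) : poch (n + 1) = poch n * (1 - q ^ (n + 1)) :=
  Finset.prod_range_succ _ n

lemma inv_poch_succ (n : ℕ) :
    (poch n)⁻¹ = (1 - q ^ (n + 1)) * (poch (n + 1))⁻¹ := by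
  have h1 := poch_mul_inv n
  have h2 := poch_mul_inv (n + 1)
  have h3 := poch_succ n
  linear_combination ((1 - q ^ (n + 1)) * (poch (n + 1))⁻¹) * h1
    - (poch n)⁻¹ * h2 + ((poch n)⁻¹ * (poch (n + 1))⁻¹) * h3

lemma inv_poch_zero : (poch 0)⁻¹ = (1 : K) := by
  have := poch_mul_inv 0
  rwa [show poch 0 = 1 from Finset.prod_range_zero _, one_mul] at this

/-- Tail congruence: the inverse Pochhammer symbols agree up to degree `d`. -/
lemma tail (d : ℕ) : ∀ m, d ≤ m →
    (PowerSeries.X : K) ^ (d + 1) ∣ (poch m)⁻¹ - (poch d)⁻¹ := by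
  intro m hm
  induction m, hm using Nat.le_induction with
  | base => simp
  | succ m hm ih =>
    have h : (poch (m + 1))⁻¹ - (poch d)⁻¹
        = q ^ (m + 1) * (poch (m + 1))⁻¹ + ((poch m)⁻¹ - (poch d)⁻¹) := by
      have := inv_poch_succ m
      linear_combination -this
    rw [h]
    refine dvd_add (Dvd.dvd.mul_right ?_ _) ih
    exact pow_dvd_pow _ (by omega)

lemma X_dvd_t {m ℓ i : ℕ} (h : m ≤ i * (i + ℓ)) :
    (PowerSeries.X : K) ^ m ∣ t ℓ i :=
  ((pow_dvd_pow (PowerSeries.X : K) h).mul_right _).mul_right _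

lemma key0 (ℓ : ℕ) : t ℓ 0 - t (ℓ + 1) 0 = q ^ (ℓ + 1) * (0 - t (ℓ + 1) 0) := by
  simp only [t, Nat.zero_mul, pow_zero, Nat.zero_add, one_mul, inv_poch_zero]
  rw [inv_poch_succ ℓ]
  ring

lemma keyS (ℓ i : ℕ) :
    t ℓ (i + 1) - t (ℓ + 1) (i + 1) = q ^ (ℓ + 1) * (t (ℓ + 2) i - t (ℓ + 1) (i + 1)) := by
  simp only [t]
  have e1 : i + 1 + ℓ = i + ℓ + 1 := by omega
  have e2 : i + 1 + (ℓ + 1) = i + ℓ + 2 := by omega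
  have e3 : i + (ℓ + 2) = i + ℓ + 2 := by omega
  rw [e1, e2, e3, inv_poch_succ (i + ℓ + 1), inv_poch_succ i]
  have e4 : i + ℓ + 1 + 1 = i + ℓ + 2 := by omega
  rw [e4]
  ring

lemma S_succ_eq (n ℓ : ℕ) :
    S (n + 1) ℓ - S (n + 1) (ℓ + 1) = q ^ (ℓ + 1) * (S n (ℓ + 2) - S (n + 1) (ℓ + 1)) := by
  have expand : S (n + 1) ℓ - S (n + 1) (ℓ + 1)
      = (∑ i ∈ Finset.range n, (t ℓ (i + 1) - t (ℓ + 1) (i + 1))) + (t ℓ 0 - t (ℓ + 1) 0) := by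
    simp only [S, ← Finset.sum_sub_distrib]
    exact Finset.sum_range_succ' _ n
  have expand2 : S (n + 1) (ℓ + 1)
      = (∑ i ∈ Finset.range n, t (ℓ + 1) (i + 1)) + t (ℓ + 1) 0 :=
    Finset.sum_range_succ' _ n
  rw [expand, expand2, key0, Finset.sum_congr rfl (fun i _ => keyS ℓ i),
    ← Finset.mul_sum, Finset.sum_sub_distrib]
  simp only [S]
  ring

lemma base (d ℓ : ℕ) (hℓ : d + 1 ≤ ℓ) :
    (PowerSeries.X : K) ^ (d + 1) ∣ S (d + 1) ℓ - (poch d)⁻¹ := by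
  have expand : S (d + 1) ℓ - (poch d)⁻¹
      = ((poch ℓ)⁻¹ - (poch d)⁻¹) + ∑ i ∈ Finset.range d, t ℓ (i + 1) := by
    have h0 : t ℓ 0 = (poch ℓ)⁻¹ := by
      simp [t, inv_poch_zero]
    have := Finset.sum_range_succ' (t ℓ) d
    simp only [S]
    rw [this, h0]
    ring
  rw [expand]
  refine dvd_add (tail d ℓ (by omega)) (Finset.dvd_sum fun i _ => X_dvd_t ?_)
  have h1 : 1 + ℓ ≤ (i + 1) * (i + 1 + ℓ) :=
    le_trans (by omega) (Nat.le_mul_of_pos_left _ (by omega))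
  omega

lemma step (d ℓ : ℕ)
    (h1 : (PowerSeries.X : K) ^ (d + 1) ∣ S (d + 1) (ℓ + 1) - (poch d)⁻¹)
    (h2 : (PowerSeries.X : K) ^ (d + 1) ∣ S (d + 1) (ℓ + 2) - (poch d)⁻¹) :
    (PowerSeries.X : K) ^ (d + 1) ∣ S (d + 1) ℓ - (poch d)⁻¹ := by
  have hrec := S_succ_eq d ℓ
  have hsplit : S (d + 1) (ℓ + 2) = S d (ℓ + 2) + t (ℓ + 2) d :=
    Finset.sum_range_succ _ _
  have key : S (d + 1) ℓ - (poch d)⁻¹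
      = (S (d + 1) (ℓ + 1) - (poch d)⁻¹)
        + (q ^ (ℓ + 1) * (S (d + 1) (ℓ + 2) - (poch d)⁻¹)
          - q ^ (ℓ + 1) * (S (d + 1) (ℓ + 1) - (poch d)⁻¹)
          - q ^ (ℓ + 1) * t (ℓ + 2) d) := by
    linear_combination hrec - q ^ (ℓ + 1) * hsplit
  have hT : (PowerSeries.X : K) ^ (d + 1) ∣ q ^ (ℓ + 1) * t (ℓ + 2) d := by
    have hd : d ≤ d * (d + (ℓ + 2)) := Nat.le_mul_of_pos_right _ (by omega)
    have : (PowerSeries.X : K) ^ (d + 1) ∣ q ^ (ℓ + 1) * q ^ (d * (d + (ℓ + 2))) := by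
      rw [q, ← pow_add]
      exact pow_dvd_pow _ (by omega)
    simp only [t]
    calc (PowerSeries.X : K) ^ (d + 1)
        ∣ q ^ (ℓ + 1) * q ^ (d * (d + (ℓ + 2))) := this
      _ ∣ q ^ (ℓ + 1) * (q ^ (d * (d + (ℓ + 2))) * (poch d)⁻¹ * (poch (d + (ℓ + 2)))⁻¹) := by
          rw [show q ^ (ℓ + 1) * (q ^ (d * (d + (ℓ + 2))) * (poch d)⁻¹ * (poch (d + (ℓ + 2)))⁻¹)
            = (q ^ (ℓ + 1) * q ^ (d * (d + (ℓ + 2)))) * ((poch d)⁻¹ * (poch (d + (ℓ + 2)))⁻¹)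
            from by ring]
          exact Dvd.dvd.mul_right dvd_rfl _
  rw [key]
  exact dvd_add h1 (((h2.mul_left _).sub (h1.mul_left _)).sub hT)

lemma main (d : ℕ) (ℓ : ℕ) :
    (PowerSeries.X : K) ^ (d + 1) ∣ S (d + 1) ℓ - (poch d)⁻¹ := by
  suffices h : ∀ n ℓ, d + 1 ≤ ℓ + n →
      (PowerSeries.X : K) ^ (d + 1) ∣ S (d + 1) ℓ - (poch d)⁻¹ by
    exact h (d + 1) ℓ (by omega)
  intro n
  induction n with
  | zero => intro ℓ hℓ; exact base d ℓ (by omega)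
  | succ n ih =>
    intro ℓ hℓ
    by_cases hc : d + 1 ≤ ℓ
    · exact base d ℓ hc
    · exact step d ℓ (ih (ℓ + 1) (by omega)) (ih (ℓ + 2) (by omega))

theorem durfee_rectangle (ℓ : ℕ) (d : ℕ) :
    PowerSeries.coeff (R := ℚ) d
        (∑ i ∈ Finset.range (d + 1), q ^ (i * (i + ℓ)) * (poch i)⁻¹ * (poch (i + ℓ))⁻¹)
    = PowerSeries.coeff (R := ℚ) d (poch d)⁻¹ := by
  have h := main d ℓ
  have hz := PowerSeries.X_pow_dvd_iff.mp h d (Nat.lt_succ_self d)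
  rw [map_sub] at hz
  have : (∑ i ∈ Finset.range (d + 1), q ^ (i * (i + ℓ)) * (poch i)⁻¹ * (poch (i + ℓ))⁻¹)
      = S (d + 1) ℓ := rfl
  rw [this]
  linarith

end Stmt3
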